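/- Let H be an antichain hypergraph on a vertex set of size 2n, let p = 1/(2n), and let E be a set of vertices. Then the total p-weight of edges of H strictly containing E is at most (2n)^{−|E|}. In particular, w_p(∂_E H) ≤ 1 where ∂_E H = {F \ E : E ⊊ F ∈ E(H)}. -/
import Mathlib

open Finset

/-- For an antichain `G` on a fintype `V`, the total weight `∑ (1/|V|)^|S|` is at most 1.
This follows from LYM together with `C(|V|, r) ≤ |V|^r`. -/
lemma antichain_weight_le_one {V : Type*} [Fintype V] [DecidableEq V]
    (G : Finset (Finset V)) (hG : IsAntichain (· ⊆ ·) (G : Set (Finset V))) :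
    ∑ S ∈ G, (1 / (Fintype.card V : ℝ)) ^ S.card ≤ 1 := by
  set N := Fintype.card V with hN
  have hmap : ∀ S ∈ G, S.card ∈ Finset.range (N + 1) := by
    intro S hS
    simp [Nat.lt_succ_iff, hN, Finset.card_le_univ S]
  rw [← Finset.sum_fiberwise_of_maps_to hmap]
  refine le_trans ?_ (Finset.sum_card_slice_div_choose_le_one (𝕜 := ℝ) hG)
  refine Finset.sum_le_sum fun r hr => ?_
  rw [Finset.mem_range, Nat.lt_succ_iff] at hr
  have hslice : G.filter (fun S => S.card = r) = G # r := rfl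
  rw [hslice]
  have hconst : ∑ S ∈ G # r, (1 / (N : ℝ)) ^ S.card = (#(G # r) : ℝ) * (1 / (N : ℝ)) ^ r := by
    rw [Finset.sum_congr rfl (fun S hS => by rw [(Finset.mem_slice.1 hS).2]),
      Finset.sum_const, nsmul_eq_mul]
  rw [hconst, ← hN]
  have hchoosepos : (0 : ℝ) < N.choose r := by
    exact_mod_cast Nat.choose_pos hr
  rw [div_eq_mul_inv]
  refine mul_le_mul_of_nonneg_left ?_ (by positivity)
  have hle : (N.choose r : ℝ) ≤ (N : ℝ) ^ r := by
    exact_mod_cast Nat.choose_le_pow N r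
  calc (1 / (N : ℝ)) ^ r = ((N : ℝ) ^ r)⁻¹ := by rw [one_div, inv_pow]
    _ ≤ ((N.choose r : ℝ))⁻¹ := by
        apply inv_anti₀ hchoosepos hle

/-- For an antichain H on 2n vertices and p = 1/(2n), the total p-weight of edges
strictly containing a set E is at most (2n)^{-|E|}; in particular the link
∂_E H has p-weight at most 1. -/
theorem stmt_8 {V : Type*} [Fintype V] [DecidableEq V] (n : ℕ)
    (H : Finset (Finset V)) (hV : Fintype.card V = 2 * n)
    (hH : IsAntichain (· ⊆ ·) (H : Set (Finset V)))
    (E : Finset V) :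
    (∑ F ∈ H.filter (fun F => E ⊂ F), (1 / (2 * n : ℝ)) ^ F.card
        ≤ (1 / (2 * n : ℝ)) ^ E.card) ∧
    (∑ F ∈ H.filter (fun F => E ⊂ F), (1 / (2 * n : ℝ)) ^ (F.card - E.card) ≤ 1) := by
  classical
  -- The filtered family, with `E` removed from each edge, is an antichain.
  set T := H.filter (fun F => E ⊂ F) with hT
  have hTE : ∀ F ∈ T, E ⊂ F := fun F hF => (Finset.mem_filter.1 hF).2
  set G := T.image (fun F => F \ E) with hGdef
  have hinj : ∀ F₁ ∈ T, ∀ F₂ ∈ T, F₁ \ E = F₂ \ E → F₁ = F₂ := by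
    intro F₁ h₁ F₂ h₂ h
    have e₁ := Finset.sdiff_union_of_subset (hTE F₁ h₁).1
    have e₂ := Finset.sdiff_union_of_subset (hTE F₂ h₂).1
    rw [← e₁, ← e₂, h]
  have hGanti : IsAntichain (· ⊆ ·) (G : Set (Finset V)) := by
    intro S₁ hS₁ S₂ hS₂ hne hsub
    simp only [hGdef, Finset.coe_image, Set.mem_image, Finset.mem_coe] at hS₁ hS₂
    obtain ⟨F₁, hF₁, rfl⟩ := hS₁
    obtain ⟨F₂, hF₂, rfl⟩ := hS₂
    have hFne : F₁ ≠ F₂ := fun h => hne (by rw [h])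
    have hsub' : F₁ ⊆ F₂ := by
      rw [← Finset.sdiff_union_of_subset (hTE F₁ hF₁).1,
        ← Finset.sdiff_union_of_subset (hTE F₂ hF₂).1]
      exact Finset.union_subset_union_left hsub
    exact hH (Finset.mem_filter.1 hF₁).1 (Finset.mem_filter.1 hF₂).1 hFne hsub'
  -- second part
  have h2 : ∑ F ∈ T, (1 / (2 * n : ℝ)) ^ (F.card - E.card) ≤ 1 := by
    have := antichain_weight_le_one G hGanti
    rw [hV] at this
    push_cast at this
    rw [hGdef, Finset.sum_image hinj] at this
    refine le_trans (le_of_eq (Finset.sum_congr rfl fun F hF => ?_)) this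
    congr 1
    rw [Finset.card_sdiff_of_subset (hTE F hF).1]
  refine ⟨?_, h2⟩
  have key : ∀ F ∈ T, (1 / (2 * n : ℝ)) ^ F.card
      = (1 / (2 * n : ℝ)) ^ E.card * (1 / (2 * n : ℝ)) ^ (F.card - E.card) := by
    intro F hF
    rw [← pow_add, Nat.add_sub_cancel' (Finset.card_le_card (hTE F hF).1)]
  calc ∑ F ∈ T, (1 / (2 * n : ℝ)) ^ F.card
      = ∑ F ∈ T, (1 / (2 * n : ℝ)) ^ E.card * (1 / (2 * n : ℝ)) ^ (F.card - E.card) :=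
        Finset.sum_congr rfl key
    _ = (1 / (2 * n : ℝ)) ^ E.card * ∑ F ∈ T, (1 / (2 * n : ℝ)) ^ (F.card - E.card) := by
        rw [Finset.mul_sum]
    _ ≤ (1 / (2 * n : ℝ)) ^ E.card * 1 := by
        apply mul_le_mul_of_nonneg_left h2 (by positivity)
    _ = (1 / (2 * n : ℝ)) ^ E.card := mul_one _
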